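/- Let F : C \to D be a functor admitting both a left adjoint L and a right adjoint R. Then L is fully faithful if and only if R is fully faithful. -/

import Mathlib

open CategoryTheory

/-- If F admits both a left adjoint L and a right adjoint R,
then L is fully faithful if and only if R is fully faithful. -/
theorem left_adjoint_fully_faithful_iff_right_adjoint_fully_faithful
    {C D : Type*} [Category C] [Category D]
    (F : C ⥤ D) (L R : D ⥤ C) (adjL : L ⊣ F) (adjR : F ⊣ R) :
    (L.Full ∧ L.Faithful) ↔ (R.Full ∧ R.Faithful) := by
  constructor
  · rintro ⟨h1, h2⟩
    have h : L.FullyFaithful := Functor.FullyFaithful.ofFullyFaithful L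
    have h' := (Adjunction.Triple.mk adjL adjR).fullyFaithfulEquiv h
    exact ⟨h'.full, h'.faithful⟩
  · rintro ⟨h1, h2⟩
    have h : R.FullyFaithful := Functor.FullyFaithful.ofFullyFaithful R
    have h' := (Adjunction.Triple.mk adjL adjR).fullyFaithfulEquiv.symm h
    exact ⟨h'.full, h'.faithful⟩
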